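/- Let R be a commutative Noetherian ring and M, N finitely generated R-modules with Ass(M) ∩ Ass(N) = ∅. Then for any R-linear map f : M → N and any prime 𝔭 of R, the 𝔭-torsion of (ker f)_𝔭 equals the 𝔭-torsion of M_𝔭 whenever 𝔭 ∈ Ass(M); in particular ℓ_𝔭(ker f) = ℓ_𝔭(M) for all associated primes 𝔭 of M. -/

import Mathlib

/-- The `𝔭`-torsion submodule `H⁰_𝔭(M)` of the localization `M_𝔭`: the elements of
`LocalizedModule 𝔭.primeCompl M` annihilated by some power of `𝔭 R_𝔭`. -/
noncomputable def pTorsion {R : Type*} [CommRing R] (p : Ideal R) [p.IsPrime]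
    (M : Type*) [AddCommGroup M] [Module R M] :
    Submodule (Localization.AtPrime p) (LocalizedModule p.primeCompl M) :=
  ⨆ n : ℕ,
    Submodule.torsionBySet (Localization.AtPrime p) (LocalizedModule p.primeCompl M)
      ((Ideal.map (algebraMap R (Localization.AtPrime p)) p ^ n :
        Ideal (Localization.AtPrime p)) : Set (Localization.AtPrime p))

/-- The length of a module: the Krull dimension of its lattice of submodules
(`⊥` never occurs; the value is `⊤` when there are chains of unbounded length). -/
noncomputable def modLength (A : Type*) (M : Type*) [Ring A] [AddCommGroup M] [Module A M] :
    WithBot ℕ∞ :=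
  Order.krullDim (Submodule A M)

/-- The local multiplicity `ℓ_𝔭(M)`: the length over `R_𝔭` of the `𝔭`-torsion submodule
of the localization `M_𝔭`. -/
noncomputable def lmult {R : Type*} [CommRing R] (p : PrimeSpectrum R)
    (M : Type*) [AddCommGroup M] [Module R M] : WithBot ℕ∞ :=
  modLength (Localization.AtPrime p.asIdeal) (pTorsion p.asIdeal M)

/-! ### Auxiliary lemmas -/

lemma mk_eq_zero_iff' {R : Type*} [CommRing R] {S : Submonoid R} {M : Type*} [AddCommGroup M]
    [Module R M] (m : M) (s : S) :
    (LocalizedModule.mk m s : LocalizedModule S M) = 0 ↔ ∃ t : S, (t : R) • m = 0 := by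
  rw [IsLocalizedModule.mk_eq_mk', IsLocalizedModule.mk'_eq_zero']
  simp [Submonoid.smul_def]

lemma mem_pTorsion_iff {R : Type*} [CommRing R] {p : Ideal R} [p.IsPrime]
    {M : Type*} [AddCommGroup M] [Module R M] {x : LocalizedModule p.primeCompl M} :
    x ∈ pTorsion p M ↔ ∃ n : ℕ,
      ∀ a ∈ (Ideal.map (algebraMap R (Localization.AtPrime p)) p) ^ n, a • x = 0 := by
  have hdir : Directed (· ≤ ·) (fun n : ℕ =>
      Submodule.torsionBySet (Localization.AtPrime p) (LocalizedModule p.primeCompl M)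
        ((Ideal.map (algebraMap R (Localization.AtPrime p)) p ^ n :
          Ideal (Localization.AtPrime p)) : Set (Localization.AtPrime p))) := by
    intro m n
    exact ⟨m + n,
      Submodule.torsionBySet_le_torsionBySet_of_subset
        (Ideal.pow_le_pow_right (by omega)),
      Submodule.torsionBySet_le_torsionBySet_of_subset
        (Ideal.pow_le_pow_right (by omega))⟩
  rw [pTorsion, Submodule.mem_iSup_of_directed _ hdir]
  refine exists_congr fun n => ?_
  rw [Submodule.mem_torsionBySet_iff]
  exact ⟨fun h a ha => h ⟨a, ha⟩, fun h a => h a a.2⟩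

lemma isAssociatedPrime_of_localized {R : Type*} [CommRing R] {p : Ideal R} [hp : p.IsPrime]
    [IsNoetherianRing R] (hfg : p.FG) {N : Type*} [AddCommGroup N] [Module R N]
    (h : IsAssociatedPrime (Ideal.map (algebraMap R (Localization.AtPrime p)) p)
      (LocalizedModule p.primeCompl N)) :
    IsAssociatedPrime p N := by
  haveI : IsNoetherianRing (Localization.AtPrime p) :=
    IsLocalization.isNoetherianRing p.primeCompl (Localization.AtPrime p) ‹_›
  obtain ⟨hq, y, hy⟩ := isAssociatedPrime_iff.mp h
  obtain ⟨⟨m, s⟩, rfl⟩ : ∃ ms : N × p.primeCompl, LocalizedModule.mk ms.1 ms.2 = y :=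
    LocalizedModule.induction_on (fun m s => ⟨⟨m, s⟩, rfl⟩) y
  have hsmul : ∀ a : R, (algebraMap R (Localization.AtPrime p) a) •
      (LocalizedModule.mk m s : LocalizedModule p.primeCompl N)
      = LocalizedModule.mk (a • m) s := fun a => by
    rw [algebraMap_smul, LocalizedModule.smul'_mk]
  have key : ∀ a : R, a ∈ p → ∃ t : p.primeCompl, (t : R) • a • m = 0 := by
    intro a ha
    have h1 : algebraMap R (Localization.AtPrime p) a •
        (LocalizedModule.mk m s : LocalizedModule p.primeCompl N) = 0 := by
      have := Ideal.mem_map_of_mem (algebraMap R (Localization.AtPrime p)) ha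
      rw [hy, Submodule.mem_colon_singleton, Submodule.mem_bot] at this
      exact this
    rw [hsmul, mk_eq_zero_iff'] at h1
    exact h1
  obtain ⟨gens, hgens⟩ := hfg
  have hmem : ∀ a ∈ gens, a ∈ p := fun a ha => hgens ▸ Ideal.subset_span ha
  choose t ht using fun (a : gens) => key a (hmem a a.2)
  set T : p.primeCompl := ∏ a : gens, t a with hT
  have hTkill : ∀ a : gens, (T : R) • ((a : R) • m) = 0 := by
    intro a
    obtain ⟨c, hc⟩ := Finset.dvd_prod_of_mem t (Finset.mem_univ a)
    have hTc : T = c * t a := by rw [hT, hc, mul_comm]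
    calc (T : R) • ((a : R) • m) = ((c : R) * (t a : R)) • ((a : R) • m) := by
          rw [hTc]; norm_cast
      _ = (c : R) • ((t a : R) • ((a : R) • m)) := by rw [mul_smul]
      _ = 0 := by rw [ht a, smul_zero]
  refine isAssociatedPrime_iff.mpr ⟨hp, (T : R) • m, le_antisymm ?_ ?_⟩
  · have hspan : Ideal.span (gens : Set R) ≤ (⊥ : Submodule R N).colon {(T : R) • m} := by
      rw [Ideal.span_le]
      intro a ha
      rw [SetLike.mem_coe, Submodule.mem_colon_singleton, Submodule.mem_bot, smul_comm]
      exact hTkill ⟨a, ha⟩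
    exact hgens ▸ hspan
  · intro a ha
    rw [Submodule.mem_colon_singleton, Submodule.mem_bot] at ha
    have h2 : (LocalizedModule.mk (a • m) s : LocalizedModule p.primeCompl N) = 0 := by
      rw [mk_eq_zero_iff']
      exact ⟨T, by rw [smul_comm, ha]⟩
    have h3 : algebraMap R (Localization.AtPrime p) a ∈
        Ideal.map (algebraMap R (Localization.AtPrime p)) p := by
      rw [hy, Submodule.mem_colon_singleton, Submodule.mem_bot, algebraMap_smul,
        LocalizedModule.smul'_mk, h2]
    have hdisj : Disjoint ((p.primeCompl : Submonoid R) : Set R) (p : Set R) :=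
      Set.disjoint_left.mpr fun x hx hxp => hx hxp
    have hcomap := IsLocalization.comap_map_of_isPrime_disjoint p.primeCompl
      (Localization.AtPrime p) (I := p) hp hdisj
    rw [← hcomap]
    exact Ideal.mem_comap.mpr h3

lemma pTorsion_eq_bot_of_not_assoc {R : Type*} [CommRing R] [IsNoetherianRing R]
    {p : Ideal R} [hp : p.IsPrime] {N : Type*} [AddCommGroup N] [Module R N]
    (hpN : p ∉ associatedPrimes R N) : pTorsion p N = ⊥ := by
  rw [eq_bot_iff]
  intro x hx
  rw [Submodule.mem_bot]
  by_contra hx0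
  haveI : IsNoetherianRing (Localization.AtPrime p) :=
    IsLocalization.isNoetherianRing p.primeCompl (Localization.AtPrime p) ‹_›
  obtain ⟨n, hn⟩ := mem_pTorsion_iff.mp hx
  obtain ⟨q, hq, hle⟩ :=
    exists_le_isAssociatedPrime_of_isNoetherianRing (Localization.AtPrime p) x hx0
  have hpow : (Ideal.map (algebraMap R (Localization.AtPrime p)) p) ^ n ≤ q := by
    refine le_trans ?_ hle
    intro a ha
    rw [Submodule.mem_colon_singleton, Submodule.mem_bot]
    exact hn a ha
  haveI := hq.isPrime
  have hqp : Ideal.map (algebraMap R (Localization.AtPrime p)) p ≤ q :=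
    Ideal.IsPrime.le_of_pow_le hpow
  have hq_eq : q = Ideal.map (algebraMap R (Localization.AtPrime p)) p := by
    rw [Localization.AtPrime.map_eq_maximalIdeal] at hqp ⊢
    exact ((IsLocalRing.maximalIdeal.isMaximal _).eq_of_le hq.isPrime.ne_top hqp).symm
  rw [hq_eq] at hq
  exact hpN (isAssociatedPrime_of_localized (IsNoetherian.noetherian p) hq)

/-- If `M` and `N` are finitely generated modules over a commutative Noetherian ring with no
associated primes in common, then for every `R`-linear map `f : M → N` and every associated
prime `𝔭` of `M`, the `𝔭`-torsion of `(ker f)_𝔭` coincides with the `𝔭`-torsion of `M_𝔭`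
(under the localized inclusion); in particular `ℓ_𝔭(ker f) = ℓ_𝔭(M)`. -/
theorem ker_open_of_disjoint_ass {R : Type*} [CommRing R] [IsNoetherianRing R]
    {M N : Type*} [AddCommGroup M] [Module R M] [Module.Finite R M]
    [AddCommGroup N] [Module R N] [Module.Finite R N]
    (hdisj : associatedPrimes R M ∩ associatedPrimes R N = ∅)
    (f : M →ₗ[R] N) :
    ∀ p : PrimeSpectrum R, p.asIdeal ∈ associatedPrimes R M →
      Submodule.map
          (LocalizedModule.map p.asIdeal.primeCompl (LinearMap.ker f).subtype)
          (pTorsion p.asIdeal (LinearMap.ker f))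
        = pTorsion p.asIdeal M ∧
      lmult p (LinearMap.ker f) = lmult p M := by
  intro p hp
  have hpN : p.asIdeal ∉ associatedPrimes R N := fun h =>
    (Set.eq_empty_iff_forall_notMem.mp hdisj p.asIdeal) ⟨hp, h⟩
  set S := p.asIdeal.primeCompl
  set g := LocalizedModule.map S (LinearMap.ker f).subtype with hg
  have hginj : Function.Injective g :=
    LocalizedModule.map_injective S (LinearMap.ker f).subtype (Submodule.injective_subtype _)
  have hrange : ∀ x : LocalizedModule S M,
      LocalizedModule.map S f x = 0 → ∃ y, g y = x := by
    intro x
    induction x using LocalizedModule.induction_on with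
    | _ m s =>
      intro hx
      rw [LocalizedModule.map_mk, mk_eq_zero_iff'] at hx
      obtain ⟨c, hc⟩ := hx
      refine ⟨LocalizedModule.mk ⟨(c : R) • m, ?_⟩ (c * s), ?_⟩
      · rw [LinearMap.mem_ker, map_smul, hc]
      · rw [hg, LocalizedModule.map_mk]
        exact LocalizedModule.mk_cancel_common_left c s m
  have hmapeq : Submodule.map g (pTorsion p.asIdeal (LinearMap.ker f))
      = pTorsion p.asIdeal M := by
    apply le_antisymm
    · rintro _ ⟨x, hx, rfl⟩
      obtain ⟨n, hn⟩ := mem_pTorsion_iff.mp hx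
      exact mem_pTorsion_iff.mpr ⟨n, fun a ha => by rw [← map_smul, hn a ha, map_zero]⟩
    · intro x hx
      obtain ⟨n, hn⟩ := mem_pTorsion_iff.mp hx
      have hFx : LocalizedModule.map S f x = 0 := by
        have hmem : LocalizedModule.map S f x ∈ pTorsion p.asIdeal N :=
          mem_pTorsion_iff.mpr ⟨n, fun a ha => by rw [← map_smul, hn a ha, map_zero]⟩
        rwa [pTorsion_eq_bot_of_not_assoc hpN, Submodule.mem_bot] at hmem
      obtain ⟨y, hy⟩ := hrange x hFx
      refine ⟨y, ?_, hy⟩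
      refine mem_pTorsion_iff.mpr ⟨n, fun a ha => hginj ?_⟩
      rw [map_smul, hy, hn a ha, map_zero]
  refine ⟨hmapeq, ?_⟩
  have e : (pTorsion p.asIdeal (LinearMap.ker f)) ≃ₗ[Localization.AtPrime p.asIdeal]
      (pTorsion p.asIdeal M) :=
    (Submodule.equivMapOfInjective g hginj (pTorsion p.asIdeal (LinearMap.ker f))).trans
      (LinearEquiv.ofEq _ _ hmapeq)
  exact Order.krullDim_eq_of_orderIso (Submodule.orderIsoMapComap e)
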